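/- For each positive integer n and positive vector x = (x₁, …, x_n), let g_n(x) = Σ_{j=1}^n ( x_j + 1/x_j ) + Σ_{j=1}^{n−1} x_j/x_{j+1}, and let m_n = inf over positive vectors x of g_n(x). Then there exists a constant C > 0 such that m_n = 3n − C + o(1) as n → ∞; that is, the sequence (3n − m_n) converges to C. (Numerically C ≈ 1.3694514; this resolves Shallit's minimization problem.) -/

import Mathlib

open Real Finset


noncomputable def gval (n : ℕ) (x : ℕ → ℝ) : ℝ :=
  (∑ j ∈ Finset.range n, (x j + 1 / x j)) + ∑ j ∈ Finset.range (n - 1), x j / x (j + 1)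

def SS (n : ℕ) : Set ℝ :=
  { s : ℝ | ∃ x : ℕ → ℝ, (∀ j, 0 < x j) ∧
      s = (∑ j ∈ Finset.range n, (x j + 1 / x j)) +
          ∑ j ∈ Finset.range (n - 1), x j / x (j + 1) }

lemma mem_SS {n : ℕ} {x : ℕ → ℝ} (hx : ∀ j, 0 < x j) : gval n x ∈ SS n := ⟨x, hx, rfl⟩

lemma SS_nonempty (n : ℕ) : (SS n).Nonempty := ⟨_, mem_SS (x := fun _ => 1) (fun _ => one_pos)⟩

lemma SS_bddBelow (n : ℕ) : BddBelow (SS n) := by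
  refine ⟨0, fun s hs => ?_⟩
  obtain ⟨x, hx, rfl⟩ := hs
  have h1 : (0:ℝ) ≤ ∑ j ∈ Finset.range n, (x j + 1 / x j) :=
    Finset.sum_nonneg fun j _ => by have := hx j; positivity
  have h2 : (0:ℝ) ≤ ∑ j ∈ Finset.range (n-1), x j / x (j+1) :=
    Finset.sum_nonneg fun j _ => by have h1 := hx j; have h2 := hx (j+1); positivity
  linarith

-- numeric kappa
lemma half_add_inv {t : ℝ} (ht : 0 < t) : Real.sqrt 2 ≤ t / 2 + 1 / t := by
  have key : 0 ≤ t*t - 2*Real.sqrt 2*t + 2 := by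
    nlinarith [sq_nonneg (t - Real.sqrt 2), Real.sq_sqrt (by norm_num : (0:ℝ) ≤ 2)]
  have heq : t / 2 + 1 / t - Real.sqrt 2 = (t*t - 2*Real.sqrt 2*t + 2) / (2*t) := by
    field_simp; ring
  have : 0 ≤ t / 2 + 1 / t - Real.sqrt 2 := heq ▸ div_nonneg key (by positivity)
  linarith

lemma lemB {t : ℝ} (ht : 0 < t) : 1 + Real.sqrt 2 - Real.log 2 ≤ t + 1 / t - Real.log t := by
  have h1 : Real.log (t / 2) ≤ t / 2 - 1 := Real.log_le_sub_one_of_pos (by positivity)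
  have h2 : Real.log (t / 2) = Real.log t - Real.log 2 := by
    rw [Real.log_div (ne_of_gt ht) (by norm_num)]
  have h3 := half_add_inv ht
  linarith

lemma lemA {t : ℝ} (ht : 0 < t) : 1 + Real.sqrt 2 - Real.log 2 ≤ t + 1 / t + Real.log t := by
  have h1 : Real.log (1 / (2 * t)) ≤ 1 / (2 * t) - 1 := Real.log_le_sub_one_of_pos (by positivity)
  have h2 : Real.log (1 / (2 * t)) = - Real.log 2 - Real.log t := by
    rw [one_div, Real.log_inv, Real.log_mul (by norm_num) (ne_of_gt ht)]
    ring
  have h3 := half_add_inv ht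
  have h4 : 1 / (2 * t) = (1/t) / 2 := by ring
  have h5 : Real.sqrt 2 ≤ (1/t) / 2 + 1 / (1/t) := half_add_inv (by positivity)
  have h6 : 1 / (1/t) = t := by field_simp
  nlinarith [h1, h2, h5]

-- main lower bound
lemma gval_lower {n : ℕ} (hn : 2 ≤ n) {x : ℕ → ℝ} (hx : ∀ j, 0 < x j) :
    3 * (n:ℝ) - 5 + (x 0 + 1 / x 0 + Real.log (x 0))
      + (x (n-1) + 1 / x (n-1) - Real.log (x (n-1))) ≤ gval n x := by
  obtain ⟨q, rfl⟩ : ∃ q, n = q + 2 := ⟨n - 2, by omega⟩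
  have hsub : q + 2 - 1 = q + 1 := rfl
  -- termwise bound
  have key : ∀ j ∈ Finset.range (q+1),
      (3:ℝ) + (Real.log (x j) - Real.log (x (j+1))) ≤ (x j + 1/x j) + x j / x (j+1) := by
    intro j _
    have h1 : Real.log (x j / x (j+1)) ≤ x j / x (j+1) - 1 :=
      Real.log_le_sub_one_of_pos (div_pos (hx j) (hx (j+1)))
    have h2 : Real.log (x j / x (j+1)) = Real.log (x j) - Real.log (x (j+1)) :=
      Real.log_div (ne_of_gt (hx j)) (ne_of_gt (hx (j+1)))
    have h3 : 2 ≤ x j + 1 / x j := by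
      have ht := hx j
      have heq : x j + 1 / x j - 2 = (x j - 1)^2 / x j := by field_simp; ring
      have h4 : 0 ≤ (x j - 1)^2 / x j := div_nonneg (sq_nonneg _) (le_of_lt ht)
      linarith
    linarith
  -- extra penalty at j = 0
  have extra : x 0 + 1 / x 0 - 2 +
      (∑ j ∈ Finset.range (q+1), ((3:ℝ) + (Real.log (x j) - Real.log (x (j+1)))))
      ≤ ∑ j ∈ Finset.range (q+1), ((x j + 1/x j) + x j / x (j+1)) := by
    have h0 : ∀ j ∈ Finset.range (q+1),
        (0:ℝ) ≤ ((x j + 1/x j) + x j / x (j+1)) - ((3:ℝ) + (Real.log (x j) - Real.log (x (j+1)))) := by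
      intro j hj; have := key j hj; linarith
    have h1 : x 0 + 1 / x 0 - 2 ≤
        ((x 0 + 1/x 0) + x 0 / x 1) - ((3:ℝ) + (Real.log (x 0) - Real.log (x 1))) := by
      have h1' : Real.log (x 0 / x 1) ≤ x 0 / x 1 - 1 :=
        Real.log_le_sub_one_of_pos (div_pos (hx 0) (hx 1))
      have h2' : Real.log (x 0 / x 1) = Real.log (x 0) - Real.log (x 1) :=
        Real.log_div (ne_of_gt (hx 0)) (ne_of_gt (hx 1))
      linarith
    have h2 := Finset.single_le_sum h0 (Finset.mem_range.mpr (Nat.succ_pos q))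
    have h3 : ∑ j ∈ Finset.range (q+1),
        (((x j + 1/x j) + x j / x (j+1)) - ((3:ℝ) + (Real.log (x j) - Real.log (x (j+1)))))
        = ∑ j ∈ Finset.range (q+1), ((x j + 1/x j) + x j / x (j+1))
          - ∑ j ∈ Finset.range (q+1), ((3:ℝ) + (Real.log (x j) - Real.log (x (j+1)))) := by
      rw [Finset.sum_sub_distrib]
    linarith [le_trans h1 h2, h3 ▸ le_trans h1 h2]
  have tel : ∑ j ∈ Finset.range (q+1), (Real.log (x j) - Real.log (x (j+1)))
      = Real.log (x 0) - Real.log (x (q+1)) :=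
    Finset.sum_range_sub' (fun j => Real.log (x j)) (q+1)
  have sum3 : ∑ j ∈ Finset.range (q+1), ((3:ℝ) + (Real.log (x j) - Real.log (x (j+1))))
      = 3 * (q+1) + (Real.log (x 0) - Real.log (x (q+1))) := by
    rw [Finset.sum_add_distrib, tel, Finset.sum_const, Finset.card_range]
    push_cast; ring
  -- split gval
  have split : gval (q+2) x = ∑ j ∈ Finset.range (q+1), ((x j + 1/x j) + x j / x (j+1))
      + (x (q+1) + 1 / x (q+1)) := by
    unfold gval
    rw [hsub]
    simp only [Finset.sum_range_succ, Finset.sum_add_distrib]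
    ring
  rw [split]
  have hn1 : ((q:ℝ)+2) - 1 = (q:ℝ) + 1 := by ring
  have : (↑(q+2) : ℝ) = (q:ℝ) + 2 := by push_cast; ring
  rw [this]
  have hidx : (q + 2 - 1 : ℕ) = q + 1 := rfl
  rw [hidx]
  linarith [extra, sum3 ▸ extra]

lemma gval_upper {n : ℕ} (hn : 3 ≤ n) :
    ∃ x : ℕ → ℝ, (∀ j, 0 < x j) ∧
      (∑ j ∈ Finset.range n, (x j + 1 / x j)) +
          (∑ j ∈ Finset.range (n - 1), x j / x (j + 1)) = 3 * (n:ℝ) - 47/35 := by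
  obtain ⟨q, rfl⟩ : ∃ q, n = q + 3 := ⟨n - 3, by omega⟩
  refine ⟨fun j => if j = 0 then 7/10 else if j = q + 2 then 7/5 else 1, fun j => ?_, ?_⟩
  · dsimp only; split <;> norm_num; split <;> norm_num
  · have hsub : q + 3 - 1 = q + 2 := rfl
    rw [hsub]
    have hf : ∀ j ∈ Finset.range (q+3),
        ((fun j => if j = 0 then (7/10:ℝ) else if j = q + 2 then 7/5 else 1) j
          + 1 / ((fun j => if j = 0 then (7/10:ℝ) else if j = q + 2 then 7/5 else 1) j))
        = 2 + (if j = 0 then (7/10 + 10/7 - 2 : ℝ) else 0)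
            + (if j = q + 2 then (7/5 + 5/7 - 2 : ℝ) else 0) := by
      intro j _
      dsimp only
      rcases eq_or_ne j 0 with h0 | h0
      · subst h0; norm_num
      · rcases eq_or_ne j (q+2) with h2 | h2
        · subst h2; simp only [h0, if_false, if_pos rfl]; norm_num
        · simp [h0, h2]; norm_num
    have hr : ∀ j ∈ Finset.range (q+2),
        ((fun j => if j = 0 then (7/10:ℝ) else if j = q + 2 then 7/5 else 1) j
          / ((fun j => if j = 0 then (7/10:ℝ) else if j = q + 2 then 7/5 else 1) (j+1)))
        = 1 + (if j = 0 then (7/10 - 1 : ℝ) else 0)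
            + (if j = q + 1 then (5/7 - 1 : ℝ) else 0) := by
      intro j hj
      have hjlt := Finset.mem_range.mp hj
      dsimp only
      rcases eq_or_ne j 0 with h0 | h0
      · subst h0
        simp only [if_pos rfl, show (0:ℕ)+1 ≠ 0 from by omega, if_neg,
          show (0:ℕ)+1 ≠ q+2 from by omega, show (0:ℕ) ≠ q+1 from by omega]
        norm_num
      · rcases eq_or_ne j (q+1) with h2 | h2
        · subst h2
          have h3 : q + 1 + 1 = q + 2 := by omega
          have h4 : q + 1 + 1 ≠ 0 := by omega
          have h5 : q + 1 ≠ q + 2 := by omega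
          simp only [h0, h3, h4, h5, if_false, if_pos rfl, if_neg]
          norm_num
        · have h3 : j + 1 ≠ 0 := by omega
          have h4 : j ≠ q + 2 := by omega
          have h5 : j + 1 ≠ q + 2 := by omega
          simp [h0, h2, h3, h4, h5]
    rw [Finset.sum_congr rfl hf, Finset.sum_congr rfl hr]
    simp only [Finset.sum_add_distrib, Finset.sum_const, Finset.card_range, nsmul_eq_mul,
      Finset.sum_ite_eq' (Finset.range (q+3)), Finset.sum_ite_eq' (Finset.range (q+2))]
    simp only [Finset.mem_range]
    have e1 : 0 < q + 3 := by omega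
    have e2 : q + 2 < q + 3 := by omega
    have e3 : 0 < q + 2 := by omega
    have e4 : q + 1 < q + 2 := by omega
    rw [if_pos e1, if_pos e2, if_pos e3, if_pos e4]
    push_cast
    ring

lemma insert_cost {a b : ℝ} (ha : 0 < a) (hb : 0 < b) (hab : (a - 1) * (b - 1) ≤ 0) :
    Real.sqrt ((1+a)*b/(1+b)) + 1 / Real.sqrt ((1+a)*b/(1+b))
      + a / Real.sqrt ((1+a)*b/(1+b)) + Real.sqrt ((1+a)*b/(1+b)) / b ≤ 3 + a / b := by
  set t := Real.sqrt ((1+a)*b/(1+b)) with htdef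
  have harg : 0 < (1+a)*b/(1+b) := by positivity
  have ht : 0 < t := Real.sqrt_pos.mpr harg
  have ht2 : t^2 = (1+a)*b/(1+b) := Real.sq_sqrt (le_of_lt harg)
  -- H inequality
  have hH : 4*(1+a)*(1+b)*b ≤ (3*b+a)^2 := by
    nlinarith [sq_nonneg (a-1), sq_nonneg (b-1),
      mul_nonneg (neg_nonneg.mpr hab) (by positivity : (0:ℝ) ≤ 2*b+1)]
  -- LHS = 2*u with u = t*(1+b)/b
  have hu : t + 1/t + a/t + t/b = t*(1+b)/b + (1+a)/t := by field_simp; ring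
  have huv : (1+a)/t = t*(1+b)/b := by
    have h1 : ((1+a)/t) * t = (t*(1+b)/b) * t := by
      rw [div_mul_cancel₀ _ (ne_of_gt ht)]
      have : t*(1+b)/b*t = t^2*(1+b)/b := by ring
      rw [this, ht2]
      field_simp
    exact mul_right_cancel₀ (ne_of_gt ht) h1
  have hLHS : t + 1/t + a/t + t/b = 2*(t*(1+b)/b) := by rw [hu, huv]; ring
  rw [hLHS]
  have hupos : 0 < t*(1+b)/b := by positivity
  have hsq : (2*(t*(1+b)/b))^2 ≤ (3 + a/b)^2 := by
    have h1 : (2*(t*(1+b)/b))^2 = 4*(t^2)*(1+b)^2/b^2 := by ring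
    rw [h1, ht2]
    have h2 : 4*((1+a)*b/(1+b))*(1+b)^2/b^2 = 4*(1+a)*(1+b)/b := by
      field_simp
    rw [h2]
    have h3 : (3 + a/b)^2 = (3*b+a)^2/b^2 := by field_simp
    rw [h3, div_le_div_iff₀ (by positivity) (by positivity)]
    nlinarith [hH, hb]
  have hrhs : 0 < 3 + a/b := by positivity
  nlinarith [hsq, hupos, hrhs]

lemma gval_insert {n k : ℕ} (hk : k + 1 < n) (x : ℕ → ℝ) (t : ℝ) :
    gval (n+1) (fun j => if j ≤ k then x j else if j = k+1 then t else x (j-1))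
      = gval n x + (t + 1/t + x k / t + t / x (k+1) - x k / x (k+1)) := by
  set y : ℕ → ℝ := fun j => if j ≤ k then x j else if j = k+1 then t else x (j-1) with hy
  have hyle : ∀ j, j ≤ k → y j = x j := by
    intro j hj; simp [hy, hj]
  have hyt : y (k+1) = t := by simp [hy]
  have hyg : ∀ j, k + 2 ≤ j → y j = x (j-1) := by
    intro j hj
    have h1 : ¬ j ≤ k := by omega
    have h2 : j ≠ k + 1 := by omega
    simp [hy, h1, h2]
  -- first sum
  have S1 : ∑ j ∈ Finset.range (n+1), (y j + 1 / y j)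
      = (∑ j ∈ Finset.range n, (x j + 1 / x j)) + (t + 1/t) := by
    rw [Finset.range_eq_Ico,
      ← Finset.sum_Ico_consecutive _ (Nat.zero_le (k+1)) (by omega : k+1 ≤ n+1),
      ← Finset.sum_Ico_consecutive _ (by omega : k+1 ≤ k+2) (by omega : k+2 ≤ n+1)]
    have e1 : ∑ j ∈ Finset.Ico 0 (k+1), (y j + 1 / y j)
        = ∑ j ∈ Finset.Ico 0 (k+1), (x j + 1 / x j) := by
      refine Finset.sum_congr rfl fun j hj => ?_
      have := (Finset.mem_Ico.mp hj).2
      rw [hyle j (by omega)]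
    have e2 : ∑ j ∈ Finset.Ico (k+1) (k+2), (y j + 1 / y j) = t + 1/t := by
      rw [Finset.sum_Ico_eq_sum_range]
      simp [hyt]
    have e3 : ∑ j ∈ Finset.Ico (k+2) (n+1), (y j + 1 / y j)
        = ∑ j ∈ Finset.Ico (k+1) n, (x j + 1 / x j) := by
      rw [Finset.sum_Ico_eq_sum_range, Finset.sum_Ico_eq_sum_range]
      have hlen : n + 1 - (k+2) = n - (k+1) := by omega
      rw [hlen]
      refine Finset.sum_congr rfl fun i _ => ?_
      rw [hyg (k+2+i) (by omega)]
      have hidx : k+2+i-1 = k+1+i := by omega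
      rw [hidx]
    rw [e1, e2, e3, Finset.range_eq_Ico,
      ← Finset.sum_Ico_consecutive (fun j => x j + 1 / x j) (Nat.zero_le (k+1)) (by omega : k+1 ≤ n)]
    ring
  -- second sum
  have S2 : ∑ j ∈ Finset.range (n+1-1), y j / y (j+1)
      = (∑ j ∈ Finset.range (n-1), x j / x (j+1)) + (x k / t + t / x (k+1) - x k / x (k+1)) := by
    have hn1 : n + 1 - 1 = n := rfl
    rw [hn1]
    rw [Finset.range_eq_Ico,
      ← Finset.sum_Ico_consecutive _ (Nat.zero_le k) (by omega : k ≤ n),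
      ← Finset.sum_Ico_consecutive (fun j => y j / y (j+1)) (by omega : k ≤ k+2) (by omega : k+2 ≤ n),
      ← Finset.sum_Ico_consecutive (fun j => y j / y (j+1)) (by omega : k ≤ k+1) (by omega : k+1 ≤ k+2)]
    have e1 : ∑ j ∈ Finset.Ico 0 k, y j / y (j+1) = ∑ j ∈ Finset.Ico 0 k, x j / x (j+1) := by
      refine Finset.sum_congr rfl fun j hj => ?_
      have := (Finset.mem_Ico.mp hj).2
      rw [hyle j (by omega), hyle (j+1) (by omega)]
    have e2 : ∑ j ∈ Finset.Ico k (k+1), y j / y (j+1) = x k / t := by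
      rw [Finset.sum_Ico_eq_sum_range]
      simp only [show k + 1 - k = 1 from by omega, Finset.sum_range_one, Nat.add_zero]
      rw [hyle k le_rfl, hyt]
    have e3 : ∑ j ∈ Finset.Ico (k+1) (k+2), y j / y (j+1) = t / x (k+1) := by
      rw [Finset.sum_Ico_eq_sum_range]
      simp only [show k + 2 - (k+1) = 1 from by omega, Finset.sum_range_one, Nat.add_zero]
      rw [hyt, hyg (k+1+1) (by omega)]
      have hidx : k+1+1-1 = k+1 := by omega
      rw [hidx]
    have e4 : ∑ j ∈ Finset.Ico (k+2) n, y j / y (j+1)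
        = ∑ j ∈ Finset.Ico (k+1) (n-1), x j / x (j+1) := by
      rw [Finset.sum_Ico_eq_sum_range, Finset.sum_Ico_eq_sum_range]
      have hlen : n - (k+2) = n - 1 - (k+1) := by omega
      rw [hlen]
      refine Finset.sum_congr rfl fun i _ => ?_
      rw [hyg (k+2+i) (by omega), hyg (k+2+i+1) (by omega)]
      have h1 : k+2+i-1 = k+1+i := by omega
      have h2 : k+2+i+1-1 = k+1+i+1 := by omega
      rw [h1, h2]
    rw [e1, e2, e3, e4]
    have : ∑ j ∈ Finset.Ico 0 (n-1), x j / x (j+1)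
        = ∑ j ∈ Finset.Ico 0 k, x j / x (j+1) + x k / x (k+1)
          + ∑ j ∈ Finset.Ico (k+1) (n-1), x j / x (j+1) := by
      rw [
        ← Finset.sum_Ico_consecutive (fun j => x j / x (j+1)) (Nat.zero_le k) (by omega : k ≤ n-1),
        ← Finset.sum_Ico_consecutive (fun j => x j / x (j+1)) (by omega : k ≤ k+1) (by omega : k+1 ≤ n-1)]
      have e5 : ∑ j ∈ Finset.Ico k (k+1), x j / x (j+1) = x k / x (k+1) := by
        rw [Finset.sum_Ico_eq_sum_range]
        simp [show k + 1 - k = 1 from by omega]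
      rw [e5]; ring
    rw [Finset.range_eq_Ico, this]; ring
  unfold gval
  rw [S1, S2]
  ring

-- numeric facts
lemma kappa_gt : (1.721 : ℝ) < 1 + Real.sqrt 2 - Real.log 2 := by
  have h1 := Real.log_two_lt_d9
  have h2 : (1.414213 : ℝ) < Real.sqrt 2 := by
    nlinarith [Real.sqrt_nonneg 2, Real.sq_sqrt (by norm_num : (0:ℝ) ≤ 2)]
  norm_num at h1 ⊢
  linarith

lemma two_le_add_inv {t : ℝ} (ht : 0 < t) : 2 ≤ t + 1 / t := by
  have heq : t + 1 / t - 2 = (t - 1)^2 / t := by field_simp; ring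
  have h4 : 0 ≤ (t - 1)^2 / t := div_nonneg (sq_nonneg _) (le_of_lt ht)
  linarith

lemma sInf_upper {n : ℕ} (hn : 3 ≤ n) : sInf (SS n) ≤ 3 * (n:ℝ) - 47/35 := by
  obtain ⟨x, hx, hval⟩ := gval_upper hn
  exact csInf_le (SS_bddBelow n) ⟨x, hx, hval.symm⟩

lemma sInf_lower {n : ℕ} (hn : 2 ≤ n) :
    3 * (n:ℝ) - 5 + 2 * (1 + Real.sqrt 2 - Real.log 2) ≤ sInf (SS n) := by
  refine le_csInf (SS_nonempty n) ?_
  rintro s ⟨x, hx, rfl⟩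
  have h := gval_lower hn hx
  have hA := lemA (hx 0)
  have hB := lemB (hx (n-1))
  have : gval n x = (∑ j ∈ Finset.range n, (x j + 1 / x j)) +
      ∑ j ∈ Finset.range (n - 1), x j / x (j + 1) := rfl
  rw [← this]
  linarith

lemma sInf_mono {n : ℕ} (hn : 3 ≤ n) : sInf (SS (n+1)) ≤ sInf (SS n) + 3 := by
  refine le_of_forall_pos_le_add fun ε hε => ?_
  have hε' : 0 < min ε (1/100) := lt_min hε (by norm_num)
  obtain ⟨s, hsmem, hslt⟩ := exists_lt_of_csInf_lt (SS_nonempty n)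
    (show sInf (SS n) < sInf (SS n) + min ε (1/100) by linarith)
  obtain ⟨x, hx, rfl⟩ := hsmem
  have hgx : gval n x < sInf (SS n) + min ε (1/100) := hslt
  by_cases hcase : ∃ k, k + 1 < n ∧ (x k - 1) * (x (k+1) - 1) ≤ 0
  · obtain ⟨k, hk, hsign⟩ := hcase
    set t := Real.sqrt ((1 + x k) * x (k+1) / (1 + x (k+1))) with htdef
    have ht : 0 < t := Real.sqrt_pos.mpr (by
      have h1 := hx k; have h2 := hx (k+1); positivity)
    have hy : ∀ j, 0 < (fun j => if j ≤ k then x j else if j = k+1 then t else x (j-1)) j := by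
      intro j; dsimp only; split_ifs
      · exact hx j
      · exact ht
      · exact hx _
    have hins := gval_insert hk x t
    have hcost := insert_cost (hx k) (hx (k+1)) hsign
    have hmem := mem_SS (n := n+1) hy
    have hle : sInf (SS (n+1)) ≤ gval (n+1)
        (fun j => if j ≤ k then x j else if j = k+1 then t else x (j-1)) :=
      csInf_le (SS_bddBelow _) hmem
    rw [hins] at hle
    have : sInf (SS (n+1)) ≤ gval n x + 3 := by
      rw [← htdef] at hcost
      linarith
    have hmin : min ε (1/100) ≤ ε := min_le_left _ _
    linarith
  · exfalso
    push_neg at hcase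
    have h0 : x 0 ≠ 1 := by
      intro h
      have := hcase 0 (by omega)
      rw [h] at this
      simp at this
    have hall : (∀ j, j < n → 1 < x j) ∨ (∀ j, j < n → x j < 1) := by
      rcases lt_or_gt_of_ne h0 with hlt | hgt
      · right; intro j hj
        induction j with
        | zero => exact hlt
        | succ i ih =>
          have hi : x i < 1 := ih (by omega)
          have hp := hcase i (by omega)
          nlinarith
      · left; intro j hj
        induction j with
        | zero => exact hgt
        | succ i ih =>
          have hi : 1 < x i := ih (by omega)
          have hp := hcase i (by omega)
          nlinarith
    have hlow := gval_lower (by omega : 2 ≤ n) hx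
    have hk2 := kappa_gt
    have h2a := two_le_add_inv (hx 0)
    have h2b := two_le_add_inv (hx (n-1))
    have hbig : 3 * (n:ℝ) - 3 + (1 + Real.sqrt 2 - Real.log 2) ≤ gval n x := by
      rcases hall with hgt1 | hlt1
      · have hlog0 : 0 ≤ Real.log (x 0) :=
          Real.log_nonneg (le_of_lt (hgt1 0 (by omega)))
        have hB := lemB (hx (n-1))
        linarith
      · have hlogn : Real.log (x (n-1)) ≤ 0 :=
          Real.log_nonpos (le_of_lt (hx (n-1))) (le_of_lt (hlt1 (n-1) (by omega)))
        have hA := lemA (hx 0)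
        linarith
    have hup := sInf_upper hn
    have hminle : min ε (1/100) ≤ 1/100 := min_le_right _ _
    linarith

theorem shallit_minimization_asymptotics (m : ℕ → ℝ)
    (hm : ∀ n : ℕ, m n = sInf { s : ℝ | ∃ x : ℕ → ℝ, (∀ j, 0 < x j) ∧
      s = (∑ j ∈ Finset.range n, (x j + 1 / x j)) +
          ∑ j ∈ Finset.range (n - 1), x j / x (j + 1) }) :
    ∃ C : ℝ, 0 < C ∧
      Filter.Tendsto (fun n : ℕ => 3 * (n : ℝ) - m n) Filter.atTop (nhds C) := by
  have hm' : ∀ n : ℕ, m n = sInf (SS n) := hm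
  have hkappa := kappa_gt
  set f : ℕ → ℝ := fun k => 3 * ((k:ℝ) + 3) - m (k + 3) with hf
  have hmono : Monotone f := by
    apply monotone_nat_of_le_succ
    intro k
    have h := sInf_mono (n := k + 3) (by omega)
    have e1 := hm' (k+3)
    have e2 := hm' (k+4)
    simp only [hf]
    push_cast
    have : m (k + 1 + 3) = m (k + 4) := by norm_num
    rw [this]
    linarith
  have hbdd : BddAbove (Set.range f) := by
    refine ⟨5, ?_⟩
    rintro _ ⟨k, rfl⟩
    have h := sInf_lower (n := k + 3) (by omega)
    have e1 := hm' (k+3)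
    simp only [hf]
    push_cast at h ⊢
    linarith
  have htend : Filter.Tendsto f Filter.atTop (nhds (⨆ k, f k)) :=
    tendsto_atTop_ciSup hmono hbdd
  refine ⟨⨆ k, f k, ?_, ?_⟩
  · have hf0 : (47:ℝ)/35 ≤ f 0 := by
      have h := sInf_upper (n := 3) (by omega)
      have e1 := hm' 3
      simp only [hf]
      push_cast
      norm_num at h ⊢
      linarith
    have h2 : f 0 ≤ ⨆ k, f k := le_ciSup hbdd 0
    calc (0:ℝ) < 47/35 := by norm_num
    _ ≤ f 0 := hf0
    _ ≤ ⨆ k, f k := h2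
  · rw [← Filter.tendsto_add_atTop_iff_nat 3]
    have : (fun n : ℕ => 3 * ((n + 3 : ℕ) : ℝ) - m (n + 3)) = f := by
      funext n
      simp only [hf]
      push_cast
      ring
    rw [this]
    exact htend
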